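/- Let Γ be a connected finite simplicial graph, A_Γ the associated right-angled Artin group, and let [v], [w] be distinct maximal equivalence classes with v adjacent to w in Γ. Let J_{v,w} = J_[v] ∩ J_[w]. Then the normalizer of A_{J_{v,w}} in A_Γ equals A_{J_{v,w}}, and the centralizer of A_{J_{v,w}} in A_Γ equals the center of the group A_{J_{v,w}}, which equals A_T where T = {u ∈ J_{v,w} : every vertex t ∈ J_{v,w} with t ≠ u is adjacent to u}. -/

import Mathlib

open SimpleGraph

namespace RaagPaper

variable {V : Type*}

/-- The link of a vertex: the set of vertices adjacent to it. -/
def lk (G : SimpleGraph V) (v : V) : Set V := G.neighborSet v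

/-- The (closed) star of a vertex: `st(v) = lk(v) ∪ {v}`. -/
def st (G : SimpleGraph V) (v : V) : Set V := insert v (G.neighborSet v)

/-- The preorder on vertices: `v ≤ w` iff `lk(v) ⊆ st(w)`. -/
def vle (G : SimpleGraph V) (v w : V) : Prop := lk G v ⊆ st G w

/-- Equivalence of vertices: `v ∼ w` iff `v ≤ w` and `w ≤ v`. -/
def vequiv (G : SimpleGraph V) (v w : V) : Prop := vle G v w ∧ vle G w v

/-- The equivalence class `[v]` of a vertex `v`. -/
def cls (G : SimpleGraph V) (v : V) : Set V := {u | vequiv G u v}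

/-- `[v]` is maximal with respect to the partial order induced by `≤`. -/
def IsMaximalClass (G : SimpleGraph V) (v : V) : Prop := ∀ w, vle G v w → vle G w v

/-- `L_[v] = lk(v) \ [v]`. -/
def Lset (G : SimpleGraph V) (v : V) : Set V := lk G v \ cls G v

/-- `J_[v] = [v] ∪ L_[v]`, the join associated to `[v]`. -/
def Jset (G : SimpleGraph V) (v : V) : Set V := cls G v ∪ Lset G v

/-- `v ∈ V_ab` : any two distinct vertices of `[v]` are adjacent (so `A_[v]` is abelian). -/
def Vab (G : SimpleGraph V) (v : V) : Prop :=
  ∀ x ∈ cls G v, ∀ y ∈ cls G v, x ≠ y → G.Adj x y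

/-- The commutator relations defining the right-angled Artin group of `G`. -/
def raagRels (G : SimpleGraph V) : Set (FreeGroup V) :=
  {r | ∃ u w : V, G.Adj u w ∧
    r = FreeGroup.of u * FreeGroup.of w * (FreeGroup.of u)⁻¹ * (FreeGroup.of w)⁻¹}

/-- The right-angled Artin group `A_Γ`. -/
abbrev Raag (G : SimpleGraph V) : Type _ := PresentedGroup (raagRels G)

/-- The generator of `A_Γ` corresponding to a vertex. -/
def gen (G : SimpleGraph V) (v : V) : Raag G := PresentedGroup.of v

/-- The special subgroup `A_Θ` generated by a set `Θ` of vertices. -/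
def Asub (G : SimpleGraph V) (Θ : Set V) : Subgroup (Raag G) :=
  Subgroup.closure (gen G '' Θ)

/-- The subgroup of inner automorphisms of a group. -/
def Inn (A : Type*) [Group A] : Subgroup (MulAut A) := (MulAut.conj : A →* MulAut A).range

instance (A : Type*) [Group A] : (Inn A).Normal := by
  constructor
  intro n hn φ
  obtain ⟨g, rfl⟩ := hn
  exact ⟨φ g, by ext x; simp [Inn, MulAut.conj]⟩

/-- The outer automorphism group `Out(A) = Aut(A)/Inn(A)`. -/
abbrev OutG (A : Type*) [Group A] : Type _ := MulAut A ⧸ Inn A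

/-- The canonical projection `Aut(A) → Out(A)`. -/
def outMk (A : Type*) [Group A] : MulAut A →* OutG A := QuotientGroup.mk' (Inn A)

section AmalgSec
open Monoid Function


namespace Amalg

variable {ι : Type*} {H : Type*} {G : ι → Type*} [Group H] [∀ i, Group (G i)]
  (φ : ∀ i, H →* G i)

open PushoutI

/-- A list of letters representing a reduced word. -/
def GoodList (l : List (Σ i, G i)) : Prop :=
  (∀ p ∈ l, p.2 ∉ (φ p.1).range) ∧ l.Chain' (fun a b => a.1 ≠ b.1)

def listProd (l : List (Σ i, G i)) : PushoutI φ :=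
  (l.map fun p => PushoutI.of p.1 p.2).prod

@[simp] theorem listProd_nil : listProd φ ([] : List (Σ i, G i)) = 1 := rfl

@[simp] theorem listProd_cons (a : Σ i, G i) (l : List (Σ i, G i)) :
    listProd φ (a :: l) = PushoutI.of a.1 a.2 * listProd φ l := by
  simp [listProd]

theorem listProd_append (l m : List (Σ i, G i)) :
    listProd φ (l ++ m) = listProd φ l * listProd φ m := by
  simp [listProd]

@[simp] theorem listProd_singleton (a : Σ i, G i) :
    listProd φ [a] = PushoutI.of a.1 a.2 := by simp

def invLetter (p : Σ i, G i) : Σ i, G i := ⟨p.1, p.2⁻¹⟩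

@[simp] theorem invLetter_fst (p : Σ i, G i) : (invLetter p).1 = p.1 := rfl

theorem listProd_rev_inv (l : List (Σ i, G i)) :
    listProd φ (l.reverse.map invLetter) = (listProd φ l)⁻¹ := by
  induction l with
  | nil => simp
  | cons a l ih =>
    rw [List.reverse_cons, List.map_append, listProd_append, ih]
    simp [invLetter]

theorem goodList_tail {a : Σ i, G i} {l : List (Σ i, G i)} (h : GoodList φ (a :: l)) :
    GoodList φ l := ⟨fun p hp => h.1 p (List.mem_cons_of_mem _ hp), h.2.tail⟩

theorem goodList_ne_one {l : List (Σ i, G i)} (h : GoodList φ l) :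
    ∀ p ∈ l, p.2 ≠ 1 := by
  intro p hp hp1
  exact h.1 p hp (hp1 ▸ ⟨1, map_one _⟩)

/-- Convert a good list into a reduced word. -/
def toWord (l : List (Σ i, G i)) (h : GoodList φ l) : CoprodI.Word G :=
  ⟨l, goodList_ne_one φ h, h.2⟩

theorem toWord_reduced (l : List (Σ i, G i)) (h : GoodList φ l) :
    Reduced φ (toWord φ l h) := fun p hp => h.1 p hp

theorem ofCoprodI_word_prod (W : CoprodI.Word G) :
    ofCoprodI (W.prod) = listProd φ W.toList := by
  rw [CoprodI.Word.prod, listProd, map_list_prod, List.map_map]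
  exact congrArg List.prod (List.map_congr_left (fun p _ => ofCoprodI_of _ _))

/-- A nonempty reduced word is not in the image of the base group. -/
theorem listProd_not_mem_base (hφ : ∀ i, Injective (φ i)) {l : List (Σ i, G i)}
    (h : GoodList φ l) (hl : l ≠ []) :
    listProd φ l ∉ (base φ).range := by
  intro hmem
  have := (toWord_reduced φ l h).eq_empty_of_mem_range hφ
    (by rw [ofCoprodI_word_prod]; exact hmem)
  apply hl
  simpa [toWord, CoprodI.Word.empty] using congrArg CoprodI.Word.toList this

theorem base_range_le_of_range (i : ι) :
    ((base φ).range : Subgroup (PushoutI φ)) ≤ (PushoutI.of (φ := φ) i).range := by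
  rintro x ⟨h, rfl⟩
  exact ⟨φ i h, of_apply_eq_base φ i h⟩

/-- A reduced word of length at least two is not in the image of any vertex group. -/
theorem listProd_not_mem_of (hφ : ∀ i, Injective (φ i)) {l : List (Σ i, G i)}
    (h : GoodList φ l) (hl : 2 ≤ l.length) (i : ι) :
    listProd φ l ∉ (PushoutI.of (φ := φ) i).range := by
  rintro ⟨g, hg⟩
  match l, h, hl with
  | ⟨i₁, g₁⟩ :: b :: t, h, _ =>
  have hab : i₁ ≠ b.1 := (List.isChain_cons.mp h.2).1 b rfl
  have hbt : GoodList φ (b :: t) := goodList_tail φ h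
  by_cases hai : i₁ = i
  · subst hai
    have hsplit1 : PushoutI.of i₁ g = PushoutI.of i₁ g₁ * listProd φ (b :: t) := by
      rw [hg, listProd_cons]
    have hprod : listProd φ (b :: t) = PushoutI.of i₁ (g₁⁻¹ * g) := by
      rw [map_mul, map_inv, hsplit1, inv_mul_cancel_left]
    by_cases hgr : g₁⁻¹ * g ∈ (φ i₁).range
    · rcases hgr with ⟨h', hh'⟩
      exact listProd_not_mem_base φ hφ hbt (by simp)
        ⟨h', by rw [hprod, ← hh', of_apply_eq_base]⟩
    · have hgood : GoodList φ (⟨i₁, (g₁⁻¹ * g)⁻¹⟩ :: b :: t) := by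
        refine ⟨?_, hbt.2.cons ?_⟩
        · rintro p hp
          rcases List.mem_cons.mp hp with rfl | hp
          · exact fun hr => hgr (by simpa using inv_mem hr)
          · exact hbt.1 p hp
        · intro y hy
          simp only [List.head?_cons, Option.mem_def, Option.some.injEq] at hy
          subst hy
          exact hab
      refine listProd_not_mem_base φ hφ hgood (by simp) ⟨1, ?_⟩
      rw [map_one, listProd_cons, hprod, ← map_mul, inv_mul_cancel, map_one]
  · by_cases hgr : g ∈ (φ i).range
    · rcases hgr with ⟨h', hh'⟩
      exact listProd_not_mem_base φ hφ h (by simp)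
        ⟨h', by rw [← hg, ← hh', of_apply_eq_base]⟩
    · have hgood : GoodList φ (⟨i, g⁻¹⟩ :: ⟨i₁, g₁⟩ :: b :: t) := by
        refine ⟨?_, h.2.cons ?_⟩
        · rintro p hp
          rcases List.mem_cons.mp hp with rfl | hp
          · simpa using hgr
          · exact h.1 p hp
        · intro y hy
          simp only [List.head?_cons, Option.mem_def, Option.some.injEq] at hy
          subst hy
          exact fun hh => hai hh.symm
      refine listProd_not_mem_base φ hφ hgood (by simp) ⟨1, ?_⟩
      rw [map_one, listProd_cons, ← hg, ← map_mul, inv_mul_cancel, map_one]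

/-- The palindrome word for conjugation. -/
theorem conj_good (l : List (Σ i, G i)) (hl : GoodList φ l) (j : ι) (c : G j)
    (hc : c ∉ (φ j).range) (hlast : ∀ p ∈ l.getLast?, p.1 ≠ j) :
    GoodList φ (l ++ ⟨j, c⟩ :: (l.reverse.map invLetter)) ∧
    listProd φ (l ++ ⟨j, c⟩ :: (l.reverse.map invLetter))
      = listProd φ l * PushoutI.of j c * (listProd φ l)⁻¹ ∧
    (l ++ ⟨j, c⟩ :: (l.reverse.map invLetter)).length = 2 * l.length + 1 := by
  refine ⟨⟨?_, ?_⟩, ?_, ?_⟩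
  · intro p hp
    rcases List.mem_append.mp hp with hp | hp
    · exact hl.1 p hp
    · rcases List.mem_cons.mp hp with rfl | hp
      · exact hc
      · rcases List.mem_map.mp hp with ⟨q, hq, rfl⟩
        have := hl.1 q (List.mem_reverse.mp hq)
        exact fun hh => this (by have h2 := inv_mem hh; exact (congrArg (· ∈ (φ q.1).range) (inv_inv q.2)).mp h2)
  · refine List.isChain_append.mpr ?_
    refine ⟨hl.2, ?_, ?_⟩
    · refine List.IsChain.cons ?_ ?_
      · rw [List.isChain_map]
        rw [List.isChain_reverse]
        exact hl.2.imp (fun a b hab => by simpa using Ne.symm hab)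
      · intro y hy
        rw [List.head?_map, List.head?_reverse] at hy
        simp only [Option.mem_def, Option.map_eq_some_iff] at hy
        rcases hy with ⟨p, hp, rfl⟩
        exact fun hh => hlast p hp (by simpa using hh.symm)
    · intro x hx y hy
      simp only [List.head?_cons, Option.mem_def, Option.some.injEq] at hy
      subst hy
      exact hlast x hx
  · rw [listProd_append, listProd_cons, listProd_rev_inv, mul_assoc]
  · simp [List.length_append]; ring

theorem mem_transversal_not_mem_range (d : Monoid.PushoutI.NormalWord.Transversal φ) {i : ι} {g : G i}
    (hg : g ∈ d.set i) (h1 : g ≠ 1) : g ∉ (φ i).range := by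
  intro hr
  have hcompl := (d.compl i).existsUnique g
  have h1' : ((⟨⟨g, hr⟩, ⟨1, d.one_mem i⟩⟩ : ((φ i).range : Set (G i)) × (d.set i)) : _).1.1 * _ = g := mul_one g
  have h2' : ((⟨⟨1, Subgroup.one_mem _⟩, ⟨g, hg⟩⟩ : ((φ i).range : Set (G i)) × (d.set i)) : _).1.1 * _ = g := one_mul g
  have := hcompl.unique h1' h2'
  apply h1
  have := congrArg (fun p => (p.1 : G i)) this
  simpa using this

/-- Every element decomposes as a base element times a reduced word. -/
theorem exists_decomp (hφ : ∀ i, Injective (φ i)) (x : PushoutI φ) :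
    ∃ (h : H) (l : List (Σ i, G i)), GoodList φ l ∧ x = base φ h * listProd φ l := by
  obtain ⟨d⟩ := Monoid.PushoutI.NormalWord.transversal_nonempty φ hφ
  classical
  let w := (NormalWord.equiv (d := d)) x
  refine ⟨w.head, w.toList, ⟨?_, w.chain_ne⟩, ?_⟩
  · rintro ⟨i, g⟩ hp
    exact mem_transversal_not_mem_range φ d (w.normalized i g hp) (w.ne_one _ hp)
  · have : w.prod = x := (NormalWord.equiv (d := d)).symm_apply_apply x
    rw [← this, NormalWord.prod, ofCoprodI_word_prod]

/-- **Key amalgam lemma**: if a subgroup `K` of a vertex group is conjugated into the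
vertex group by `x`, then either `x` is in the vertex group, or `K` is conjugate into
the base group. -/
theorem key (hφ : ∀ i, Injective (φ i)) (j : ι) (K : Subgroup (PushoutI φ))
    (hK : K ≤ (PushoutI.of (φ := φ) j).range)
    (x : PushoutI φ) (hx : x ∉ (PushoutI.of (φ := φ) j).range)
    (hconj : ∀ k ∈ K, x * k * x⁻¹ ∈ (PushoutI.of (φ := φ) j).range) :
    ∃ g : PushoutI φ, ∀ k ∈ K, g * k * g⁻¹ ∈ (base φ).range := by
  by_cases hKbase : K ≤ (base φ).range
  · exact ⟨1, fun k hk => by simpa using hKbase hk⟩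
  obtain ⟨k₀, hk₀K, hk₀⟩ : ∃ k₀ ∈ K, k₀ ∉ (base φ).range := by
    by_contra hcon
    push_neg at hcon
    exact hKbase hcon
  obtain ⟨h, l, hl, rfl⟩ := exists_decomp φ hφ x
  have hbase_j : ∀ (h' : H), base φ h' ∈ (PushoutI.of (φ := φ) j).range :=
    fun h' => ⟨φ j h', of_apply_eq_base φ j h'⟩
  have hconj' : ∀ k ∈ K, listProd φ l * k * (listProd φ l)⁻¹ ∈
      (PushoutI.of (φ := φ) j).range := by
    intro k hk
    have h1 := hconj k hk
    have : listProd φ l * k * (listProd φ l)⁻¹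
        = (base φ h)⁻¹ * (base φ h * listProd φ l * k * (base φ h * listProd φ l)⁻¹)
          * base φ h := by
      group
    rw [this]
    exact Subgroup.mul_mem _ (Subgroup.mul_mem _ (by simpa using hbase_j h⁻¹) (by
      simpa [mul_assoc] using h1)) (hbase_j h)
  have hxl : listProd φ l ∉ (PushoutI.of (φ := φ) j).range := by
    intro hmem
    exact hx (Subgroup.mul_mem _ (hbase_j h) hmem)
  have hlne : l ≠ [] := by
    rintro rfl
    exact hxl (by rw [listProd_nil]; exact Subgroup.one_mem _)
  obtain ⟨l₀, a, rfl⟩ : ∃ l₀ a, l = l₀ ++ [a] := by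
    rcases List.eq_nil_or_concat l with rfl | ⟨l₀, a, rfl⟩
    · exact absurd rfl hlne
    · exact ⟨l₀, a, by simp⟩
  by_cases ha : a.1 = j
  · -- last letter in the vertex group `G j`
    subst ha
    by_cases hl₀ne : l₀ = []
    · subst hl₀ne
      exact absurd ⟨a.2, by simp⟩ hxl
    have hsplit := List.isChain_append.mp hl.2
    have hgood₀ : GoodList φ l₀ :=
      ⟨fun p hp => hl.1 p (List.mem_append.mpr (Or.inl hp)), hsplit.1⟩
    have hlast₀ : ∀ p ∈ l₀.getLast?, p.1 ≠ a.1 := by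
      intro p hp
      exact hsplit.2.2 p hp ⟨a.1, a.2⟩ rfl
    refine ⟨PushoutI.of a.1 a.2, ?_⟩
    intro k hk
    obtain ⟨c, hc⟩ := hK hk
    suffices hsuff : a.2 * c * a.2⁻¹ ∈ (φ a.1).range by
      obtain ⟨h', hh'⟩ := hsuff
      refine ⟨h', ?_⟩
      rw [← of_apply_eq_base φ a.1 h', hh', ← hc]
      simp [map_mul]
    by_contra hcr
    obtain ⟨hgoodP, hprodP, hlenP⟩ :=
      conj_good φ l₀ hgood₀ a.1 (a.2 * c * a.2⁻¹) hcr hlast₀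
    refine listProd_not_mem_of φ hφ hgoodP ?_ a.1 ?_
    · rw [hlenP]
      have : 1 ≤ l₀.length := List.length_pos_iff.mpr hl₀ne
      omega
    · rw [hprodP]
      have : listProd φ l₀ * PushoutI.of a.1 (a.2 * c * a.2⁻¹) * (listProd φ l₀)⁻¹
          = listProd φ (l₀ ++ [a]) * k * (listProd φ (l₀ ++ [a]))⁻¹ := by
        rw [listProd_append, listProd_singleton, ← hc]
        simp [map_mul, mul_assoc]
      rw [this]
      exact hconj' k hk
  · -- last letter not in the vertex group `G j`
    obtain ⟨c₀, hc₀⟩ := hK hk₀K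
    have hc₀r : c₀ ∉ (φ j).range := by
      rintro ⟨h', hh'⟩
      exact hk₀ ⟨h', by rw [← hc₀, ← hh', of_apply_eq_base]⟩
    have hlast : ∀ p ∈ (l₀ ++ [a]).getLast?, p.1 ≠ j := by
      intro p hp
      rw [List.getLast?_concat] at hp
      simp only [Option.mem_def, Option.some.injEq] at hp
      subst hp
      exact ha
    obtain ⟨hgoodP, hprodP, hlenP⟩ := conj_good φ (l₀ ++ [a]) hl j c₀ hc₀r hlast
    exfalso
    refine listProd_not_mem_of φ hφ hgoodP ?_ j ?_
    · rw [hlenP]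
      have : 1 ≤ (l₀ ++ [a]).length := by simp
      omega
    · rw [hprodP, hc₀]
      exact hconj' k₀ hk₀K

end Amalg

end AmalgSec

section RaagInfra
variable {G : SimpleGraph V}


theorem gen_comm {u w : V} (h : G.Adj u w) : Commute (gen G u) (gen G w) := by
  rw [← commutatorElement_eq_one_iff_commute]
  have hmem : FreeGroup.of u * FreeGroup.of w * (FreeGroup.of u)⁻¹ * (FreeGroup.of w)⁻¹
      ∈ raagRels G := ⟨u, w, h, rfl⟩
  have h1 : (PresentedGroup.mk (raagRels G))
      (FreeGroup.of u * FreeGroup.of w * (FreeGroup.of u)⁻¹ * (FreeGroup.of w)⁻¹) = 1 :=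
    (QuotientGroup.eq_one_iff _).mpr (Subgroup.subset_normalClosure hmem)
  simpa [commutatorElement_def, map_mul, map_inv, gen, PresentedGroup.of] using h1

/-- Lift a vertex assignment with commuting images to a homomorphism on the RAAG. -/
def raagLift {A : Type*} [Group A] (f : V → A)
    (hf : ∀ u w, G.Adj u w → Commute (f u) (f w)) : Raag G →* A :=
  PresentedGroup.toGroup (f := f) (by
    rintro r ⟨u, w, huw, rfl⟩
    simp only [map_mul, map_inv, FreeGroup.lift_apply_of]
    rw [(hf u w huw).eq]
    group)

@[simp] theorem raagLift_gen {A : Type*} [Group A] (f : V → A)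
    (hf : ∀ u w, G.Adj u w → Commute (f u) (f w)) (v : V) :
    raagLift f hf (gen G v) = f v :=
  PresentedGroup.toGroup.of _

theorem raag_top : (⊤ : Subgroup (Raag G)) = Subgroup.closure (Set.range (gen G)) :=
  (PresentedGroup.closure_range_of _).symm

theorem Asub_mono {S T : Set V} (h : S ⊆ T) : Asub G S ≤ Asub G T :=
  Subgroup.closure_mono (Set.image_mono h)

theorem gen_mem_Asub {S : Set V} {v : V} (h : v ∈ S) : gen G v ∈ Asub G S :=
  Subgroup.subset_closure ⟨v, h, rfl⟩

theorem Asub_univ : Asub G (Set.univ : Set V) = ⊤ := by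
  refine le_antisymm le_top ?_
  rw [raag_top]
  refine (Subgroup.closure_le _).mpr ?_
  rintro x ⟨v, rfl⟩
  exact gen_mem_Asub (Set.mem_univ v)

open scoped Classical in
/-- The retraction onto a special subgroup. -/
noncomputable def ret (Θ : Set V) : Raag G →* Raag G :=
  raagLift (fun v => if v ∈ Θ then gen G v else 1) (by
    intro u w huw
    by_cases hu : u ∈ Θ <;> by_cases hw : w ∈ Θ <;>
      simp [hu, hw, gen_comm huw, Commute.one_left, Commute.one_right])

theorem ret_gen_mem {Θ : Set V} {v : V} (h : v ∈ Θ) : ret Θ (gen G v) = gen G v := by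
  simp [ret, h]

theorem ret_gen_not_mem {Θ : Set V} {v : V} (h : v ∉ Θ) : ret Θ (gen G v) = 1 := by
  simp [ret, h]

theorem ret_fix {Θ : Set V} {x : Raag G} (hx : x ∈ Asub G Θ) : ret Θ x = x := by
  induction hx using Subgroup.closure_induction with
  | mem y hy =>
    obtain ⟨v, hv, rfl⟩ := hy
    exact ret_gen_mem hv
  | one => simp
  | mul a b _ _ ha hb => simp [map_mul, ha, hb]
  | inv a _ ha => simp [map_inv, ha]

theorem ret_mem_of_mem {S Θ : Set V} {x : Raag G} (hx : x ∈ Asub G S) :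
    ret Θ x ∈ Asub G (S ∩ Θ) := by
  induction hx using Subgroup.closure_induction with
  | mem y hy =>
    obtain ⟨v, hv, rfl⟩ := hy
    by_cases hvθ : v ∈ Θ
    · rw [ret_gen_mem hvθ]
      exact gen_mem_Asub ⟨hv, hvθ⟩
    · rw [ret_gen_not_mem hvθ]
      exact Subgroup.one_mem _
  | one => exact Subgroup.one_mem _
  | mul a b _ _ ha hb => rw [map_mul]; exact Subgroup.mul_mem _ ha hb
  | inv a _ ha => rw [map_inv]; exact Subgroup.inv_mem _ ha

theorem Asub_inter_le {S T : Set V} : Asub G S ⊓ Asub G T ≤ Asub G (S ∩ T) := by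
  rintro x ⟨hxS, hxT⟩
  have := ret_mem_of_mem (Θ := T) hxS
  rwa [ret_fix hxT] at this

/-- Abelianization homomorphism. -/
noncomputable def abel : Raag G →* Multiplicative (V → ℤ) :=
  raagLift (fun v => Multiplicative.ofAdd (by classical exact Pi.single v 1))
    (fun _ _ _ => mul_comm _ _)

theorem abel_gen (v : V) :
    abel (gen G v) = Multiplicative.ofAdd (by classical exact Pi.single v (1 : ℤ)) :=
  raagLift_gen _ _ v

theorem abel_support {Θ : Set V} {x : Raag G} (hx : x ∈ Asub G Θ) {t : V} (ht : t ∉ Θ) :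
    Multiplicative.toAdd (abel x) t = 0 := by
  classical
  induction hx using Subgroup.closure_induction with
  | mem y hy =>
    obtain ⟨v, hv, rfl⟩ := hy
    have hne : t ≠ v := fun h => ht (h ▸ hv)
    rw [abel_gen]
    simpa using Pi.single_eq_of_ne hne 1
  | one => simp
  | mul a b _ _ ha hb => simp_all [map_mul]
  | inv a _ ha => simp_all [map_inv]

theorem abel_gen_self (t : V) : Multiplicative.toAdd (abel (G := G) (gen G t)) t = 1 := by
  classical
  rw [abel_gen]
  simp

/-- If a conjugate of a generator lies in a special subgroup, the vertex is in the set. -/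
theorem vertex_mem_of_conj_mem {Θ : Set V} {t : V} {c : Raag G}
    (h : c * gen G t * c⁻¹ ∈ Asub G Θ) : t ∈ Θ := by
  by_contra ht
  have h1 := abel_support h ht
  have h2 : abel (c * gen G t * c⁻¹) = abel (gen G t) := by
    simp only [map_mul, map_inv]
    rw [mul_comm (abel c) (abel (gen G t))]
    simp [mul_assoc]
  rw [h2, abel_gen_self] at h1
  exact one_ne_zero h1


end RaagInfra

section VertexAmalgam

open Monoid Function

variable (G : SimpleGraph V) (u : V)

/-- The special subgroup on the complement of a vertex. -/
def Acompl : Subgroup (Raag G) := Asub G {x | x ≠ u}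

/-- The special subgroup on the star of a vertex. -/
def Ast : Subgroup (Raag G) := Asub G (st G u)

/-- The special subgroup on the link of a vertex. -/
def Alk : Subgroup (Raag G) := Asub G (lk G u)

theorem lk_subset_compl : lk G u ⊆ {x | x ≠ u} := fun _ hx => (G.ne_of_adj hx).symm

theorem lk_subset_st : lk G u ⊆ st G u := Set.subset_insert _ _

theorem Alk_le_Acompl : Alk G u ≤ Acompl G u := Asub_mono (lk_subset_compl G u)

theorem Alk_le_Ast : Alk G u ≤ Ast G u := Asub_mono (lk_subset_st G u)

/-- The two vertex groups of the amalgam decomposition at `u`. -/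
def Gfam : Bool → Type _ := fun b => match b with
  | true => ↥(Acompl G u)
  | false => ↥(Ast G u)

instance : ∀ b, Group (Gfam G u b) := fun b => match b with
  | true => inferInstanceAs (Group ↥(Acompl G u))
  | false => inferInstanceAs (Group ↥(Ast G u))

/-- The edge group inclusions. -/
def φfam : ∀ b, ↥(Alk G u) →* Gfam G u b := fun b => match b with
  | true => Subgroup.inclusion (Alk_le_Acompl G u)
  | false => Subgroup.inclusion (Alk_le_Ast G u)

theorem φfam_injective : ∀ b, Function.Injective (φfam G u b) := fun b => by
  cases b
  · exact Subgroup.inclusion_injective (Alk_le_Ast G u)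
  · exact Subgroup.inclusion_injective (Alk_le_Acompl G u)

/-- From the amalgam to the RAAG. -/
def ΦA : PushoutI (φfam G u) →* Raag G :=
  PushoutI.lift
    (fun b => match b with
      | true => (Acompl G u).subtype
      | false => (Ast G u).subtype)
    (Alk G u).subtype
    (by intro b; cases b <;> rfl)

theorem u_mem_st : u ∈ st G u := Set.mem_insert _ _

theorem of_true_lk {b : V} (hb : b ∈ lk G u) :
    (PushoutI.of (φ := φfam G u) true ⟨gen G b, gen_mem_Asub (lk_subset_compl G u hb)⟩)
      = PushoutI.of (φ := φfam G u) false ⟨gen G b, gen_mem_Asub (lk_subset_st G u hb)⟩ := by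
  have h1 : (⟨gen G b, gen_mem_Asub (lk_subset_compl G u hb)⟩ : ↥(Acompl G u))
      = φfam G u true ⟨gen G b, gen_mem_Asub hb⟩ := rfl
  have h2 : (⟨gen G b, gen_mem_Asub (lk_subset_st G u hb)⟩ : ↥(Ast G u))
      = φfam G u false ⟨gen G b, gen_mem_Asub hb⟩ := rfl
  rw [h1, h2, PushoutI.of_apply_eq_base, PushoutI.of_apply_eq_base]

open scoped Classical in
/-- The image of a generator in the amalgam. -/
noncomputable def ΨAgen (v : V) : PushoutI (φfam G u) :=
  if h : v = u then PushoutI.of false ⟨gen G u, gen_mem_Asub (u_mem_st G u)⟩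
  else PushoutI.of true ⟨gen G v, gen_mem_Asub h⟩

theorem ΨAgen_u : ΨAgen G u u = PushoutI.of false ⟨gen G u, gen_mem_Asub (u_mem_st G u)⟩ :=
  dif_pos rfl

theorem ΨAgen_ne {v : V} (h : v ≠ u) :
    ΨAgen G u v = PushoutI.of true ⟨gen G v, gen_mem_Asub h⟩ :=
  dif_neg h

theorem ΨAgen_comm {a b : V} (hab : G.Adj a b) :
    Commute (ΨAgen G u a) (ΨAgen G u b) := by
  have hcs : ∀ (x y : Raag G) (hx : x ∈ Ast G u) (hy : y ∈ Ast G u), Commute x y →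
      Commute (⟨x, hx⟩ : ↥(Ast G u)) ⟨y, hy⟩ := fun x y hx hy h => Subtype.ext h
  have hcc : ∀ (x y : Raag G) (hx : x ∈ Acompl G u) (hy : y ∈ Acompl G u), Commute x y →
      Commute (⟨x, hx⟩ : ↥(Acompl G u)) ⟨y, hy⟩ := fun x y hx hy h => Subtype.ext h
  by_cases ha : a = u <;> by_cases hb : b = u
  · exact absurd (ha.trans hb.symm) (G.ne_of_adj hab)
  · have hblk : b ∈ lk G u := ha ▸ hab
    rw [ha, ΨAgen_u, ΨAgen_ne G u hb, of_true_lk G u hblk]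
    exact (hcs _ _ _ _ (gen_comm (ha ▸ hab))).map _
  · have halk : a ∈ lk G u := hb ▸ (G.adj_symm hab)
    rw [hb, ΨAgen_u, ΨAgen_ne G u ha, of_true_lk G u halk]
    exact (hcs _ _ _ _ (gen_comm (hb ▸ hab))).map _
  · rw [ΨAgen_ne G u ha, ΨAgen_ne G u hb]
    exact (hcc _ _ _ _ (gen_comm hab)).map _

/-- From the RAAG to the amalgam. -/
noncomputable def ΨA : Raag G →* PushoutI (φfam G u) :=
  raagLift (ΨAgen G u) (fun _ _ hab => ΨAgen_comm G u hab)

theorem ΦA_ΨA (x : Raag G) : ΦA G u (ΨA G u x) = x := by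
  classical
  have : (ΦA G u).comp (ΨA G u) = MonoidHom.id _ := by
    apply PresentedGroup.ext
    intro v
    show ΦA G u (ΨA G u (gen G v)) = gen G v
    rw [ΨA, raagLift_gen]
    by_cases hv : v = u
    · subst hv
      rw [ΨAgen_u, ΦA]
      exact PushoutI.lift_of ..
    · rw [ΨAgen_ne G u hv, ΦA]
      exact PushoutI.lift_of ..
  exact DFunLike.congr_fun this x

theorem ΨA_of_true {x : Raag G} (hx : x ∈ Acompl G u) :
    ΨA G u x = PushoutI.of true (⟨x, hx⟩ : ↥(Acompl G u)) := by
  classical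
  induction hx using Subgroup.closure_induction with
  | mem y hy =>
    obtain ⟨v, hv, rfl⟩ := hy
    rw [ΨA, raagLift_gen, ΨAgen_ne G u hv]
  | one => rw [map_one, ← map_one (PushoutI.of (φ := φfam G u) true)]; rfl
  | mul a b _ _ ha hb => rw [map_mul, ha, hb]; exact (map_mul _ _ _).symm
  | inv a _ ha => rw [map_inv, ha]; exact (map_inv _ _).symm

theorem ΨA_of_false {x : Raag G} (hx : x ∈ Ast G u) :
    ΨA G u x = PushoutI.of false (⟨x, hx⟩ : ↥(Ast G u)) := by
  classical
  induction hx using Subgroup.closure_induction with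
  | mem y hy =>
    obtain ⟨v, hv, rfl⟩ := hy
    by_cases hvu : v = u
    · subst hvu
      rw [ΨA, raagLift_gen, ΨAgen_u]
    · have hvlk : v ∈ lk G u := by
        rcases hv with rfl | hv
        · exact absurd rfl hvu
        · exact hv
      rw [ΨA, raagLift_gen, ΨAgen_ne G u hvu]
      exact of_true_lk G u hvlk
  | one => rw [map_one, ← map_one (PushoutI.of (φ := φfam G u) false)]; rfl
  | mul a b _ _ ha hb => rw [map_mul, ha, hb]; exact (map_mul _ _ _).symm
  | inv a _ ha => rw [map_inv, ha]; exact (map_inv _ _).symm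

theorem mem_Acompl_of_Psi {x : Raag G}
    (h : ΨA G u x ∈ (PushoutI.of (φ := φfam G u) true).range) : x ∈ Acompl G u := by
  obtain ⟨y, hy⟩ := h
  have h2 := congrArg (ΦA G u) hy
  rw [ΦA_ΨA] at h2
  rw [ΦA, PushoutI.lift_of] at h2
  rw [← h2]
  exact y.2

theorem mem_Ast_of_Psi {x : Raag G}
    (h : ΨA G u x ∈ (PushoutI.of (φ := φfam G u) false).range) : x ∈ Ast G u := by
  obtain ⟨y, hy⟩ := h
  have h2 := congrArg (ΦA G u) hy
  rw [ΦA_ΨA] at h2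
  rw [ΦA, PushoutI.lift_of] at h2
  rw [← h2]
  exact y.2

theorem step_true (K : Subgroup (Raag G)) (hK : K ≤ Acompl G u) (g : Raag G)
    (hg : g ∉ Acompl G u) (hconj : ∀ k ∈ K, g * k * g⁻¹ ∈ Acompl G u) :
    ∃ c : Raag G, ∀ k ∈ K, c * k * c⁻¹ ∈ Alk G u := by
  obtain ⟨c', hc'⟩ := Amalg.key (φfam G u) (φfam_injective G u) true (K.map (ΨA G u))
    (by rintro _ ⟨k, hk, rfl⟩; exact ⟨⟨k, hK hk⟩, (ΨA_of_true G u (hK hk)).symm⟩)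
    (ΨA G u g)
    (fun h => hg (mem_Acompl_of_Psi G u h))
    (by
      rintro _ ⟨k, hk, rfl⟩
      have h1 : ΨA G u g * ΨA G u k * (ΨA G u g)⁻¹ = ΨA G u (g * k * g⁻¹) := by
        rw [map_mul, map_mul, map_inv]
      rw [h1, ΨA_of_true G u (hconj k hk)]
      exact ⟨_, rfl⟩)
  refine ⟨ΦA G u c', ?_⟩
  intro k hk
  obtain ⟨y, hy⟩ := hc' (ΨA G u k) ⟨k, hk, rfl⟩
  have h2 := congrArg (ΦA G u) hy
  rw [map_mul, map_mul, map_inv, ΦA_ΨA] at h2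
  have h3 : ΦA G u (PushoutI.base (φfam G u) y) = (Alk G u).subtype y :=
    PushoutI.lift_base _ _ _ y
  rw [h3] at h2
  rw [← h2]
  exact y.2

theorem step_false (K : Subgroup (Raag G)) (hK : K ≤ Ast G u) (g : Raag G)
    (hg : g ∉ Ast G u) (hconj : ∀ k ∈ K, g * k * g⁻¹ ∈ Ast G u) :
    ∃ c : Raag G, ∀ k ∈ K, c * k * c⁻¹ ∈ Alk G u := by
  obtain ⟨c', hc'⟩ := Amalg.key (φfam G u) (φfam_injective G u) false (K.map (ΨA G u))
    (by rintro _ ⟨k, hk, rfl⟩; exact ⟨⟨k, hK hk⟩, (ΨA_of_false G u (hK hk)).symm⟩)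
    (ΨA G u g)
    (fun h => hg (mem_Ast_of_Psi G u h))
    (by
      rintro _ ⟨k, hk, rfl⟩
      have h1 : ΨA G u g * ΨA G u k * (ΨA G u g)⁻¹ = ΨA G u (g * k * g⁻¹) := by
        rw [map_mul, map_mul, map_inv]
      rw [h1, ΨA_of_false G u (hconj k hk)]
      exact ⟨_, rfl⟩)
  refine ⟨ΦA G u c', ?_⟩
  intro k hk
  obtain ⟨y, hy⟩ := hc' (ΨA G u k) ⟨k, hk, rfl⟩
  have h2 := congrArg (ΦA G u) hy
  rw [map_mul, map_mul, map_inv, ΦA_ΨA] at h2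
  have h3 : ΦA G u (PushoutI.base (φfam G u) y) = (Alk G u).subtype y :=
    PushoutI.lift_base _ _ _ y
  rw [h3] at h2
  rw [← h2]
  exact y.2

/-- **Servatius' centralizer theorem, one generator**: anything commuting with `gen u`
lies in `A_{st(u)}`. -/
theorem commute_mem_Ast {g : Raag G} (hg : Commute g (gen G u)) : g ∈ Ast G u := by
  by_contra hgn
  have hzle : Subgroup.zpowers (gen G u) ≤ Ast G u := by
    rw [Subgroup.zpowers_le]
    exact gen_mem_Asub (u_mem_st G u)
  obtain ⟨c, hc⟩ := step_false G u (Subgroup.zpowers (gen G u)) hzle g hgn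
    (by
      intro k hk
      obtain ⟨n, rfl⟩ := Subgroup.mem_zpowers_iff.mp hk
      have hcom : Commute g ((gen G u) ^ n) := hg.zpow_right n
      rw [show g * (gen G u) ^ n * g⁻¹ = (gen G u) ^ n from by rw [hcom.eq]; group]
      exact hzle ⟨n, rfl⟩)
  have hmem := hc (gen G u) (Subgroup.mem_zpowers _)
  have : u ∈ lk G u := vertex_mem_of_conj_mem hmem
  exact G.irrefl this

end VertexAmalgam

section Assembly

variable {G : SimpleGraph V}

theorem mem_Asub_finset_inter [Fintype V] (s : Finset V) (f : V → Set V) {g : Raag G}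
    (hg : ∀ t ∈ s, g ∈ Asub G (f t)) : g ∈ Asub G {x | ∀ t ∈ s, x ∈ f t} := by
  classical
  induction s using Finset.induction_on with
  | empty =>
    have h1 : {x : V | ∀ t ∈ (∅ : Finset V), x ∈ f t} = Set.univ := by ext; simp
    rw [h1, Asub_univ]
    trivial
  | @insert a s ha ih =>
    have h1 : g ∈ Asub G (f a) := hg a (by simp)
    have h2 : g ∈ Asub G {x | ∀ t ∈ s, x ∈ f t} := ih (fun t ht => hg t (by simp [ht]))
    have h3 := Asub_inter_le ⟨h1, h2⟩
    have h4 : f a ∩ {x | ∀ t ∈ s, x ∈ f t} = {x | ∀ t ∈ insert a s, x ∈ f t} := by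
      ext x
      simp only [Set.mem_inter_iff, Set.mem_setOf_eq, Finset.mem_insert]
      constructor
      · rintro ⟨h5, h6⟩ t (rfl | ht)
        · exact h5
        · exact h6 t ht
      · intro h5
        exact ⟨h5 a (Or.inl rfl), fun t ht => h5 t (Or.inr ht)⟩
    rwa [h4] at h3

theorem center_map_eq (K : Subgroup (Raag G)) :
    (Subgroup.center ↥K).map K.subtype = K ⊓ Subgroup.centralizer (K : Set (Raag G)) := by
  ext x
  rw [Subgroup.mem_map, Subgroup.mem_inf]
  constructor
  · rintro ⟨⟨y, hyK⟩, hyc, rfl⟩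
    refine ⟨hyK, Subgroup.mem_centralizer_iff.mpr ?_⟩
    intro h hh
    exact congrArg Subtype.val ((Subgroup.mem_center_iff.mp hyc) ⟨h, hh⟩)
  · rintro ⟨hxK, hxc⟩
    exact ⟨⟨x, hxK⟩, Subgroup.mem_center_iff.mpr
      (fun z => Subtype.ext (Subgroup.mem_centralizer_iff.mp hxc z z.2)), rfl⟩

end Assembly


section Main

variable {G : SimpleGraph V}

theorem vle_refl (v : V) : vle G v v := fun x hx => Set.mem_insert_iff.mpr (Or.inr hx)

theorem vequiv_refl (v : V) : vequiv G v v := ⟨vle_refl v, vle_refl v⟩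

theorem mem_Jset_self (v : V) : v ∈ Jset G v := Or.inl (vequiv_refl v)

theorem lk_mem_Jset {x v : V} (h : x ∈ lk G v) : x ∈ Jset G v := by
  by_cases hc : x ∈ cls G v
  · exact Or.inl hc
  · exact Or.inr ⟨h, hc⟩

end Main

theorem normalizer_centralizer_center_of_adjacent_joins' {V : Type*} [Fintype V] [Nonempty V]
    (G : SimpleGraph V) (hconn : G.Connected) (v w : V)
    (hv : IsMaximalClass G v) (hw : IsMaximalClass G w)
    (hne : ¬ vequiv G v w) (hadj : G.Adj v w) :
    Subgroup.normalizer (Asub G (Jset G v ∩ Jset G w) : Set (Raag G)) = Asub G (Jset G v ∩ Jset G w) ∧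
    Subgroup.centralizer (Asub G (Jset G v ∩ Jset G w) : Set (Raag G))
      = Asub G {u ∈ Jset G v ∩ Jset G w |
          ∀ t ∈ Jset G v ∩ Jset G w, t ≠ u → G.Adj t u} ∧
    (Subgroup.center ↥(Asub G (Jset G v ∩ Jset G w))).map
        (Asub G (Jset G v ∩ Jset G w)).subtype
      = Asub G {u ∈ Jset G v ∩ Jset G w |
          ∀ t ∈ Jset G v ∩ Jset G w, t ≠ u → G.Adj t u} := by
  classical
  set J : Set V := Jset G v ∩ Jset G w with hJdef
  set T : Set V := {u ∈ J | ∀ t ∈ J, t ≠ u → G.Adj t u} with hTdef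
  have hvJ : v ∈ J := ⟨mem_Jset_self v, lk_mem_Jset (show G.Adj w v from hadj.symm)⟩
  have hwJ : w ∈ J := ⟨lk_mem_Jset (show G.Adj v w from hadj), mem_Jset_self w⟩
  have hTJ : T ⊆ J := fun x hx => hx.1
  have hadj_mem : ∀ u : V, G.Adj u v → G.Adj u w → u ∈ J := fun u h1 h2 =>
    ⟨lk_mem_Jset (show G.Adj v u from h1.symm), lk_mem_Jset (show G.Adj w u from h2.symm)⟩
  -- the centralizer computation
  have hcent : Subgroup.centralizer (Asub G J : Set (Raag G)) = Asub G T := by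
    apply le_antisymm
    · intro g hg
      have hsts : ∀ t ∈ J, g ∈ Asub G (st G t) := by
        intro t ht
        apply commute_mem_Ast
        exact (Subgroup.mem_centralizer_iff.mp hg (gen G t) (gen_mem_Asub ht)).symm
      have hfin := mem_Asub_finset_inter J.toFinset (fun t => st G t)
        (fun t ht => hsts t (Set.mem_toFinset.mp ht))
      have hset : {x | ∀ t ∈ J.toFinset, x ∈ st G t} = T := by
        ext x
        simp only [Set.mem_toFinset, Set.mem_setOf_eq]
        constructor
        · intro hx
          have hxv := Set.mem_insert_iff.mp (hx v hvJ)
          have hxw := Set.mem_insert_iff.mp (hx w hwJ)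
          have hxJ : x ∈ J := by
            constructor
            · rcases hxv with rfl | hxv
              · exact mem_Jset_self _
              · exact lk_mem_Jset hxv
            · rcases hxw with rfl | hxw
              · exact mem_Jset_self _
              · exact lk_mem_Jset hxw
          refine ⟨hxJ, ?_⟩
          intro t ht htx
          rcases Set.mem_insert_iff.mp (hx t ht) with rfl | h
          · exact absurd rfl htx
          · exact h
        · rintro ⟨hxJ, hxadj⟩ t ht
          by_cases htx : t = x
          · subst htx
            exact Set.mem_insert _ _
          · exact Set.mem_insert_iff.mpr (Or.inr (hxadj t ht htx))
      rwa [hset] at hfin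
    · refine (Subgroup.closure_le _).mpr ?_
      rintro _ ⟨x, hxT, rfl⟩
      rw [SetLike.mem_coe, Subgroup.mem_centralizer_iff]
      intro h hh
      have hcomm : ∀ a ∈ Asub G J, Commute a (gen G x) := by
        intro a ha
        induction ha using Subgroup.closure_induction with
        | mem y hy =>
          obtain ⟨t, htJ, rfl⟩ := hy
          by_cases htx : t = x
          · subst htx; exact Commute.refl _
          · exact gen_comm (hxT.2 t htJ htx)
        | one => exact Commute.one_left _
        | mul a b _ _ ha hb => exact ha.mul_left hb
        | inv a _ ha => exact ha.inv_left
      exact hcomm h hh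
  -- the normalizer computation
  have hnorm : Subgroup.normalizer (Asub G J : Set (Raag G)) = Asub G J := by
    apply le_antisymm
    · intro g hg
      by_cases hJu : ∀ u : V, u ∈ J
      · have hJeq : J = Set.univ := Set.eq_univ_of_forall hJu
        rw [hJdef] at hJeq
        rw [hJdef, hJeq, Asub_univ]
        trivial
      · have hcompl : ∀ u : V, u ∉ J → g ∈ Asub G {x | x ≠ u} := by
          intro u huJ
          by_contra hgn
          have hle : Asub G J ≤ Acompl G u :=
            Asub_mono (fun x hxJ (hxu : x = u) => huJ (hxu ▸ hxJ))
          obtain ⟨c, hc⟩ := step_true G u (Asub G J) hle g hgn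
            (fun k hk => hle ((Subgroup.mem_normalizer_iff.mp hg k).mp hk))
          have h1 : v ∈ lk G u := vertex_mem_of_conj_mem (hc (gen G v) (gen_mem_Asub hvJ))
          have h2 : w ∈ lk G u := vertex_mem_of_conj_mem (hc (gen G w) (gen_mem_Asub hwJ))
          exact huJ (hadj_mem u h1 h2)
        have hfin := mem_Asub_finset_inter (G := G) (Set.toFinset {u | u ∉ J})
          (fun u => {x | x ≠ u}) (fun t ht => hcompl t (Set.mem_toFinset.mp ht))
        have hset2 : {x | ∀ t ∈ Set.toFinset {u | u ∉ J}, x ∈ {y | y ≠ t}} = J := by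
          ext x
          simp only [Set.mem_toFinset, Set.mem_setOf_eq]
          constructor
          · intro hx
            by_contra hxJ
            exact hx x hxJ rfl
          · intro hxJ t htJ hxt
            exact htJ (hxt ▸ hxJ)
        rwa [hset2] at hfin
    · exact Subgroup.le_normalizer
  refine ⟨hnorm, hcent, ?_⟩
  rw [center_map_eq, hcent, inf_eq_right.mpr (Asub_mono hTJ)]

/-- for distinct adjacent maximal classes `[v]`, `[w]` and
`J_{v,w} = J_[v] ∩ J_[w]`, the normalizer of `A_{J_{v,w}}` is `A_{J_{v,w}}`, and its
centralizer equals the center of `A_{J_{v,w}}`, which equals `A_T` where `T` is the set of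
vertices of `J_{v,w}` adjacent to every other vertex of `J_{v,w}`. -/
theorem normalizer_centralizer_center_of_adjacent_joins {V : Type*} [Fintype V] [Nonempty V]
    (G : SimpleGraph V) (hconn : G.Connected) (v w : V)
    (hv : IsMaximalClass G v) (hw : IsMaximalClass G w)
    (hne : ¬ vequiv G v w) (hadj : G.Adj v w) :
    Subgroup.normalizer (Asub G (Jset G v ∩ Jset G w) : Set (Raag G)) = Asub G (Jset G v ∩ Jset G w) ∧
    Subgroup.centralizer (Asub G (Jset G v ∩ Jset G w) : Set (Raag G))
      = Asub G {u ∈ Jset G v ∩ Jset G w |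
          ∀ t ∈ Jset G v ∩ Jset G w, t ≠ u → G.Adj t u} ∧
    (Subgroup.center ↥(Asub G (Jset G v ∩ Jset G w))).map
        (Asub G (Jset G v ∩ Jset G w)).subtype
      = Asub G {u ∈ Jset G v ∩ Jset G w |
          ∀ t ∈ Jset G v ∩ Jset G w, t ≠ u → G.Adj t u} := by
  exact normalizer_centralizer_center_of_adjacent_joins' G hconn v w hv hw hne hadj

end RaagPaper
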